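/- Let R be a discrete valuation ring with fraction field K and valuation v_R, and let p be a prime. Let f = T^p + a_{p-1}T^{p-1} + ⋯ + a_0 ∈ K[T] be a separable polynomial with a_0 ≠ 0, p ∤ v_R(a_0), and min_{i≥0} v_R(a_i) > p · max_{i≥0}(v_R(a_0) − v_R(a_i)). Then K' = K[T]/(f) is a field, the integral closure of R in K' is a discrete valuation ring, and its ramification index over R equals p. -/

import Mathlib

set_option maxHeartbeats 1000000
set_option synthInstance.maxHeartbeats 400000

open Polynomial UniqueFactorizationMonoid Ideal IsLocalRing

section Aux

variable (R : Type*) [CommRing R] [IsDomain R] [IsDiscreteValuationRing R]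
    (K : Type*) [Field K] [Algebra R K] [IsFractionRing R K]
    (π : R) (hπ : Irreducible π)
    (v : K → ℤ)
    (hv_mul : ∀ x y : K, x ≠ 0 → y ≠ 0 → v (x * y) = v x + v y)
    (hv_ring : ∀ x : K, x ≠ 0 → (0 ≤ v x ↔ ∃ r : R, algebraMap R K r = x))
    (hv_π : v (algebraMap R K π) = 1)
    (p : ℕ) (hp : p.Prime) (f : Polynomial K)
    (hmonic : f.Monic) (hdeg : f.natDegree = p)
    (ha0 : f.coeff 0 ≠ 0)
    (hval : ¬ (p : ℤ) ∣ v (f.coeff 0))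
    (hmin : ∀ i < p, ∀ j < p, f.coeff i ≠ 0 → f.coeff j ≠ 0 →
      v (f.coeff i) > (p : ℤ) * (v (f.coeff 0) - v (f.coeff j)))

include hπ hv_mul hv_ring hv_π hp hmonic hdeg ha0 hval hmin in
/-- Key Newton-polygon style computation: for any nonzero prime `Q` of the integral
closure of `R` in a field `L` containing a root `α` of `f`, the image of `π` lies in `Q`
and `p` divides the multiplicity of `Q` in the factorization of `π`. -/
theorem lemA
    (L : Type*) [Field L] [Algebra K L] [Algebra R L] [IsScalarTower R K L]
    [IsDedekindDomain (integralClosure R L)] [DecidableEq (Ideal (integralClosure R L))]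
    (α : L) (hα : Polynomial.aeval α f = 0)
    (Q : Ideal (integralClosure R L)) (hQp : Q.IsPrime) (hQ0 : Q ≠ ⊥) :
    algebraMap R (integralClosure R L) π ∈ Q ∧
      p ∣ Multiset.count Q (normalizedFactors
        (Ideal.span {algebraMap R (integralClosure R L) π})) := by
  have hp2 : 2 ≤ p := hp.two_le
  have hppos : (0:ℤ) < p := by exact_mod_cast hp.pos
  -- injectivity facts
  have hRK : Function.Injective (algebraMap R K) := IsFractionRing.injective R K
  have hRL : Function.Injective (algebraMap R L) := by
    rw [IsScalarTower.algebraMap_eq R K L]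
    exact (algebraMap K L).injective.comp hRK
  have hRS : Function.Injective (algebraMap R (integralClosure R L)) := by
    intro a b h
    apply hRL
    rw [IsScalarTower.algebraMap_apply R (integralClosure R L) L,
      IsScalarTower.algebraMap_apply R (integralClosure R L) L, h]
  have hSL : Function.Injective (algebraMap (integralClosure R L) L) :=
    Subtype.val_injective
  -- basic valuation facts
  have hv1 : v 1 = 0 := by
    have := hv_mul 1 1 one_ne_zero one_ne_zero
    simpa using this
  have hvunit : ∀ u : Rˣ, v (algebraMap R K u) = 0 := by
    intro u
    have h1 : algebraMap R K u ≠ 0 := fun h => u.ne_zero (hRK (by simpa using h))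
    have h2 : algebraMap R K ↑u⁻¹ ≠ 0 := fun h => u⁻¹.ne_zero (hRK (by simpa using h))
    have hmul := hv_mul _ _ h1 h2
    rw [← _root_.map_mul, Units.mul_inv, _root_.map_one, hv1] at hmul
    have hge1 : 0 ≤ v (algebraMap R K u) := (hv_ring _ h1).mpr ⟨u, rfl⟩
    have hge2 : 0 ≤ v (algebraMap R K ↑u⁻¹) := (hv_ring _ h2).mpr ⟨↑u⁻¹, rfl⟩
    omega
  have hvpow : ∀ x : K, x ≠ 0 → ∀ nn : ℕ, v (x ^ nn) = nn * v x := by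
    intro x hx nn
    induction nn with
    | zero => simpa using hv1
    | succ k ih =>
      rw [pow_succ, hv_mul _ _ (pow_ne_zero _ hx) hx, ih]
      push_cast; ring
  have hπK : algebraMap R K π ≠ 0 := fun h => hπ.ne_zero (hRK (by simpa using h))
  have hvπn : ∀ (u : Rˣ) (nn : ℕ), v (algebraMap R K (↑u * π ^ nn)) = nn := by
    intro u nn
    rw [_root_.map_mul, _root_.map_pow]
    have h1 : algebraMap R K ↑u ≠ 0 := fun h => u.ne_zero (hRK (by simpa using h))
    rw [hv_mul _ _ h1 (pow_ne_zero _ hπK), hvunit, hvpow _ hπK, hv_π]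
    ring
  -- positivity of coefficient valuations
  have hm0 : 0 < v (f.coeff 0) := by
    have h := hmin 0 hp.pos 0 hp.pos ha0 ha0
    simpa using h
  have hvpos : ∀ i, i < p → f.coeff i ≠ 0 → 0 < v (f.coeff i) := by
    intro i hi hne
    have h := hmin i hi i hi hne hne
    nlinarith [hm0]
  -- integral coefficients
  have hrex : ∀ i : ℕ, ∃ rc : R, algebraMap R K rc = f.coeff i := by
    intro i
    by_cases h0 : f.coeff i = 0
    · exact ⟨0, by simp [h0]⟩
    rcases lt_trichotomy i p with hi | hi | hi
    · exact (hv_ring _ h0).mp (hvpos i hi h0).le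
    · refine ⟨1, ?_⟩
      rw [_root_.map_one]
      subst hi
      rw [← hdeg, hmonic.coeff_natDegree]
    · exact absurd (Polynomial.coeff_eq_zero_of_natDegree_lt (by omega)) h0
  choose r hr using hrex
  have hrzero : ∀ i, f.coeff i = 0 → r i = 0 := by
    intro i h0
    apply hRK
    rw [hr i, h0, _root_.map_zero]
  -- the integral polynomial
  set F : Polynomial R := X ^ p + ∑ i ∈ Finset.range p, C (r i) * X ^ i with hF
  have hmapF : F.map (algebraMap R K) = f := by
    conv_rhs => rw [hmonic.as_sum, hdeg]
    rw [hF]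
    simp only [Polynomial.map_add, Polynomial.map_pow, Polynomial.map_X, Polynomial.map_sum,
      Polynomial.map_mul, Polynomial.map_C]
    congr 1
    exact Finset.sum_congr rfl fun i _ => by rw [hr i]
  have hFm : F.Monic := Polynomial.monic_of_injective hRK (by rw [hmapF]; exact hmonic)
  have haF : Polynomial.aeval α F = 0 := by
    rw [← Polynomial.aeval_map_algebraMap K α F, hmapF]
    exact hα
  have hint : IsIntegral R α := ⟨F, hFm, by rwa [Polynomial.aeval_def] at haF⟩
  set α' : integralClosure R L := ⟨α, hint⟩ with hα'
  have hα0 : α ≠ 0 := by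
    intro h
    apply ha0
    rw [Polynomial.coeff_zero_eq_aeval_zero]
    have h2 : (algebraMap K L) ((Polynomial.aeval (0:K)) f) = 0 := by
      rw [← Polynomial.aeval_algebraMap_apply, _root_.map_zero]
      exact h ▸ hα
    exact (map_eq_zero_iff _ (algebraMap K L).injective).mp h2
  have hα'0 : α' ≠ 0 := by
    intro h
    apply hα0
    have : (α' : L) = 0 := by rw [h]; rfl
    simpa [hα'] using this
  have hπS : algebraMap R (integralClosure R L) π ≠ 0 :=
    fun h => hπ.ne_zero (hRS (by simpa using h))
  -- the equation in L
  have hEqL : α ^ p + ∑ i ∈ Finset.range p, algebraMap R L (r i) * α ^ i = 0 := by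
    have h := haF
    rw [hF] at h
    simpa [Polynomial.aeval_def, Polynomial.eval₂_add, Polynomial.eval₂_pow,
      Polynomial.eval₂_finset_sum, Polynomial.eval₂_mul, Polynomial.eval₂_C,
      Polynomial.eval₂_X] using h
  -- the equation in S
  have hEqS : α' ^ p + ∑ i ∈ Finset.range p, algebraMap R (integralClosure R L) (r i) * α' ^ i
      = 0 := by
    apply hSL
    rw [_root_.map_add, _root_.map_pow, _root_.map_sum, _root_.map_zero]
    simp only [_root_.map_mul, ← IsScalarTower.algebraMap_apply R (integralClosure R L) L]
    have hcoe : algebraMap (integralClosure R L) L α' = α := by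
      rw [Subalgebra.algebraMap_eq]
      rfl
    rw [hcoe]
    exact hEqL
  -- count machinery
  have hQprime : Prime Q := Ideal.prime_of_isPrime hQ0 hQp
  have hmem : ∀ x : integralClosure R L, x ≠ 0 → ∀ k : ℕ,
      (x ∈ Q ^ k ↔ k ≤ Multiset.count Q (normalizedFactors (Ideal.span {x}))) := by
    intro x hx k
    have hsp : Ideal.span {x} ≠ 0 := by
      simpa [Ideal.span_singleton_eq_bot] using hx
    rw [← Ideal.span_singleton_le_iff_mem, ← Ideal.dvd_iff_le, pow_dvd_iff_le_emultiplicity,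
      UniqueFactorizationMonoid.emultiplicity_eq_count_normalizedFactors hQprime.irreducible hsp,
      normalize_eq, Nat.cast_le]
  have hcmul : ∀ x y : integralClosure R L, x ≠ 0 → y ≠ 0 →
      Multiset.count Q (normalizedFactors (Ideal.span {x * y})) =
        Multiset.count Q (normalizedFactors (Ideal.span {x})) +
        Multiset.count Q (normalizedFactors (Ideal.span {y})) := by
    intro x y hx hy
    rw [← Ideal.span_singleton_mul_span_singleton,
      UniqueFactorizationMonoid.normalizedFactors_mul
        (by simpa [Ideal.span_singleton_eq_bot] using hx)
        (by simpa [Ideal.span_singleton_eq_bot] using hy),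
      Multiset.count_add]
  have hcone : Multiset.count Q (normalizedFactors (Ideal.span {(1 : integralClosure R L)})) = 0 := by
    rw [show Ideal.span {(1 : integralClosure R L)} = 1 by
      rw [Ideal.span_singleton_one, Ideal.one_eq_top]]
    rw [UniqueFactorizationMonoid.normalizedFactors_one]
    simp
  have hcpow : ∀ x : integralClosure R L, x ≠ 0 → ∀ k : ℕ,
      Multiset.count Q (normalizedFactors (Ideal.span {x ^ k})) =
        k * Multiset.count Q (normalizedFactors (Ideal.span {x})) := by
    intro x hx k
    induction k with
    | zero => simpa using hcone
    | succ m ih =>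
      rw [pow_succ, hcmul _ _ (pow_ne_zero _ hx) hx, ih]
      ring
  have hcunit : ∀ u : Rˣ,
      Multiset.count Q (normalizedFactors
        (Ideal.span {algebraMap R (integralClosure R L) ↑u})) = 0 := by
    intro u
    have h1 : algebraMap R (integralClosure R L) ↑u ≠ 0 :=
      fun h => u.ne_zero (hRS (by simpa using h))
    have h2 : algebraMap R (integralClosure R L) ↑u⁻¹ ≠ 0 :=
      fun h => u⁻¹.ne_zero (hRS (by simpa using h))
    have hmul := hcmul _ _ h1 h2
    rw [← _root_.map_mul, Units.mul_inv, _root_.map_one, hcone] at hmul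
    omega
  -- abbreviations
  set t : ℕ := Multiset.count Q (normalizedFactors (Ideal.span {α'})) with hT
  set e : ℕ := Multiset.count Q (normalizedFactors
    (Ideal.span {algebraMap R (integralClosure R L) π})) with hE
  -- the values n i
  have hnex : ∀ i : ℕ, ∃ nn : ℕ, f.coeff i ≠ 0 →
      (v (f.coeff i) = (nn : ℤ) ∧
        Multiset.count Q (normalizedFactors
          (Ideal.span {algebraMap R (integralClosure R L) (r i)})) = nn * e) := by
    intro i
    by_cases h0 : f.coeff i = 0
    · exact ⟨0, fun hne => absurd h0 hne⟩
    have hr0 : r i ≠ 0 := fun h => h0 (by rw [← hr i, h, _root_.map_zero])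
    obtain ⟨nn, u, hu⟩ := IsDiscreteValuationRing.eq_unit_mul_pow_irreducible hr0 hπ
    refine ⟨nn, fun _ => ⟨?_, ?_⟩⟩
    · rw [← hr i, hu]
      exact hvπn u nn
    · rw [hu, _root_.map_mul, _root_.map_pow]
      have h1 : algebraMap R (integralClosure R L) ↑u ≠ 0 :=
        fun h => u.ne_zero (hRS (by simpa using h))
      rw [hcmul _ _ h1 (pow_ne_zero _ hπS), hcunit, hcpow _ hπS, ← hE, zero_add]
  choose n hn using hnex
  -- π lies in Q
  have hπQ : algebraMap R (integralClosure R L) π ∈ Q := by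
    obtain ⟨x, hxQ, hx0⟩ := (Submodule.ne_bot_iff Q).mp hQ0
    have hcne : Q.comap (algebraMap R (integralClosure R L)) ≠ ⊥ :=
      Ideal.comap_ne_bot_of_integral_mem hx0 hxQ
        (IsIntegralClosure.isIntegral R L x)
    haveI : (Q.comap (algebraMap R (integralClosure R L))).IsPrime := hQp.comap _
    have hmax := IsPrime.to_maximal_ideal (S := Q.comap (algebraMap R (integralClosure R L))) hcne
    have heq := IsLocalRing.eq_maximalIdeal hmax
    have hπm : π ∈ IsLocalRing.maximalIdeal R :=
      (IsLocalRing.mem_maximalIdeal π).mpr hπ.not_isUnit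
    rw [← heq] at hπm
    exact hπm
  have he1 : 1 ≤ e := by
    have h := (hmem _ hπS 1).mp (by simpa [pow_one] using hπQ)
    rw [← hE] at h
    exact h
  -- integer data
  have hn0 : v (f.coeff 0) = (n 0 : ℤ) := (hn 0 ha0).1
  have hn0pos : 1 ≤ n 0 := by
    have := hm0
    rw [hn0] at this
    exact_mod_cast this
  have hpn0 : ¬ p ∣ n 0 := by
    intro hdvd
    apply hval
    rw [hn0]
    exact_mod_cast hdvd
  have hNineq : ∀ i, i < p → f.coeff i ≠ 0 →
      (p : ℤ) * (n 0) + 1 ≤ ((p : ℤ) + 1) * (n i) := by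
    intro i hi hne
    have h := hmin i hi i hi hne hne
    rw [hn0, (hn i hne).1] at h
    nlinarith [h]
  -- trichotomy
  rcases lt_trichotomy (p * t) (e * n 0) with hlt | heq | hgt
  · -- case p t < e n 0 : contradiction
    exfalso
    have hmemall : ∀ i ∈ Finset.range p,
        algebraMap R (integralClosure R L) (r i) * α' ^ i ∈ Q ^ (p * t + 1) := by
      intro i hi
      rw [Finset.mem_range] at hi
      by_cases h0 : f.coeff i = 0
      · rw [hrzero i h0, _root_.map_zero, zero_mul]
        exact zero_mem _
      have hc0 : algebraMap R (integralClosure R L) (r i) ≠ 0 :=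
        fun h => h0 (by rw [← hr i, show r i = 0 from hRS (by simpa using h), _root_.map_zero])
      have hprod0 : algebraMap R (integralClosure R L) (r i) * α' ^ i ≠ 0 :=
        mul_ne_zero hc0 (pow_ne_zero _ hα'0)
      rw [hmem _ hprod0, hcmul _ _ hc0 (pow_ne_zero _ hα'0), (hn i h0).2, hcpow _ hα'0, ← hT]
      -- goal : p * t + 1 ≤ n i * e + i * t
      have hB := hNineq i hi h0
      have hA : (p:ℤ) * t + 1 ≤ e * n 0 := by exact_mod_cast hlt
      rcases Nat.eq_zero_or_pos i with hi0 | hi1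
      · subst hi0
        have h : p * t + 1 ≤ n 0 * e := by
          zify
          nlinarith [hA]
        simpa using h
      · zify
        have hI1 : (1:ℤ) ≤ i := by exact_mod_cast hi1
        have hE1 : (1:ℤ) ≤ e := by exact_mod_cast he1
        have hT0 : (0:ℤ) ≤ t := by positivity
        have hP0 : (0:ℤ) ≤ p := by positivity
        nlinarith [mul_nonneg (by linarith : (0:ℤ) ≤ (e:ℤ))
            (by linarith : (0:ℤ) ≤ ((p:ℤ)+1)*(n i) - ((p:ℤ)*(n 0)+1)),
          mul_nonneg hP0 (by linarith : (0:ℤ) ≤ (e:ℤ)*(n 0) - ((p:ℤ)*t+1)),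
          mul_nonneg (mul_nonneg (by linarith : (0:ℤ) ≤ (p:ℤ)+1)
            (by linarith : (0:ℤ) ≤ (i:ℤ)-1)) hT0]
    have hsum : α' ^ p ∈ Q ^ (p * t + 1) := by
      have h := hEqS
      have : α' ^ p = -∑ i ∈ Finset.range p,
          algebraMap R (integralClosure R L) (r i) * α' ^ i := by
        linear_combination h
      rw [this]
      exact neg_mem (Ideal.sum_mem _ hmemall)
    have h := (hmem _ (pow_ne_zero _ hα'0) _).mp hsum
    rw [hcpow _ hα'0, ← hT] at h
    exact Nat.not_succ_le_self (p * t) h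
  · -- case p t = e n 0 : conclude p ∣ e
    refine ⟨hπQ, ?_⟩
    have hdvd : p ∣ e * n 0 := ⟨t, heq.symm⟩
    have hcop : p.Coprime (n 0) := (Nat.Prime.coprime_iff_not_dvd hp).mpr hpn0
    exact hcop.dvd_of_dvd_mul_right hdvd
  · -- case p t > e n 0 : contradiction
    exfalso
    have hA : (e:ℤ) * n 0 + 1 ≤ p * t := by exact_mod_cast hgt
    have hE1 : (1:ℤ) ≤ e := by exact_mod_cast he1
    have hN0 : (1:ℤ) ≤ n 0 := by exact_mod_cast hn0pos
    have hT1 : 1 ≤ t := by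
      rcases Nat.eq_zero_or_pos t with h | h
      · exfalso; rw [h] at hgt; omega
      · exact h
    have hmemall : ∀ i ∈ Finset.Ico 1 p,
        algebraMap R (integralClosure R L) (r i) * α' ^ i ∈ Q ^ (e * n 0 + 1) := by
      intro i hi
      rw [Finset.mem_Ico] at hi
      by_cases h0 : f.coeff i = 0
      · rw [hrzero i h0, _root_.map_zero, zero_mul]
        exact zero_mem _
      have hc0 : algebraMap R (integralClosure R L) (r i) ≠ 0 :=
        fun h => h0 (by rw [← hr i, show r i = 0 from hRS (by simpa using h), _root_.map_zero])
      have hprod0 : algebraMap R (integralClosure R L) (r i) * α' ^ i ≠ 0 :=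
        mul_ne_zero hc0 (pow_ne_zero _ hα'0)
      rw [hmem _ hprod0, hcmul _ _ hc0 (pow_ne_zero _ hα'0), (hn i h0).2, hcpow _ hα'0, ← hT]
      -- goal : e * n 0 + 1 ≤ n i * e + i * t
      have hB := hNineq i hi.2 h0
      zify
      have hI1 : (1:ℤ) ≤ i := by exact_mod_cast hi.1
      have hT0 : (1:ℤ) ≤ t := by exact_mod_cast hT1
      have hP0 : (0:ℤ) ≤ p := by positivity
      nlinarith [mul_nonneg (mul_nonneg hP0 (by linarith : (0:ℤ) ≤ (e:ℤ)))
          (by linarith : (0:ℤ) ≤ ((p:ℤ)+1)*(n i) - ((p:ℤ)*(n 0)+1)),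
        mul_nonneg (by linarith : (0:ℤ) ≤ (p:ℤ)+1)
          (by linarith : (0:ℤ) ≤ (p:ℤ)*t - ((e:ℤ)*(n 0)+1)),
        mul_nonneg hP0 (by linarith : (0:ℤ) ≤ (p:ℤ)+1),
        mul_nonneg (by linarith : (0:ℤ) ≤ (i:ℤ)-1) (by linarith : (0:ℤ) ≤ (t:ℤ))]
    have hpow : α' ^ p ∈ Q ^ (e * n 0 + 1) := by
      rw [hmem _ (pow_ne_zero _ hα'0), hcpow _ hα'0, ← hT]
      zify
      nlinarith [hA]
    have hc00 : algebraMap R (integralClosure R L) (r 0) ∈ Q ^ (e * n 0 + 1) := by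
      have hsplit : ∑ i ∈ Finset.range p,
          algebraMap R (integralClosure R L) (r i) * α' ^ i =
          algebraMap R (integralClosure R L) (r 0) +
            ∑ i ∈ Finset.Ico 1 p,
              algebraMap R (integralClosure R L) (r i) * α' ^ i := by
        rw [Finset.range_eq_Ico, Finset.sum_eq_sum_Ico_succ_bot hp.pos]
        simp
      have : algebraMap R (integralClosure R L) (r 0) =
          -(α' ^ p) - ∑ i ∈ Finset.Ico 1 p,
            algebraMap R (integralClosure R L) (r i) * α' ^ i := by
        have h := hEqS
        rw [hsplit] at h
        linear_combination h
      rw [this]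
      exact sub_mem (neg_mem hpow) (Ideal.sum_mem _ hmemall)
    have hc0ne : algebraMap R (integralClosure R L) (r 0) ≠ 0 :=
      fun h => ha0 (by rw [← hr 0, show r 0 = 0 from hRS (by simpa using h), _root_.map_zero])
    have h := (hmem _ hc0ne _).mp hc00
    rw [(hn 0 ha0).2, Nat.mul_comm (n 0) e] at h
    exact Nat.not_succ_le_self (e * n 0) h

include hπ hv_mul hv_ring hv_π hp hmonic hdeg ha0 hval hmin in
/-- If `L/K` is a finite separable extension containing a root of `f`, then `p ≤ [L:K]`;
moreover if `[L:K] = p` then the integral closure of `R` in `L` is a DVR in which `π`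
is associated to the `p`-th power of any irreducible element. -/
theorem lemB
    (L : Type*) [Field L] [Algebra K L] [Algebra R L] [IsScalarTower R K L]
    [FiniteDimensional K L] [Algebra.IsSeparable K L]
    (α : L) (hα : Polynomial.aeval α f = 0) :
    p ≤ Module.finrank K L ∧
      (Module.finrank K L = p →
        IsDiscreteValuationRing (integralClosure R L) ∧
        ∀ ϖ : integralClosure R L, Irreducible ϖ →
          Associated (algebraMap R (integralClosure R L) π) (ϖ ^ p)) := by
  classical
  haveI hded : IsDedekindDomain (integralClosure R L) :=
    integralClosure.isDedekindDomain R K L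
  haveI : Module.Finite R (integralClosure R L) :=
    IsIntegralClosure.finite R K L (integralClosure R L)
  haveI : IsFractionRing (integralClosure R L) L :=
    IsIntegralClosure.isFractionRing_of_finite_extension R K L (integralClosure R L)
  have hRK : Function.Injective (algebraMap R K) := IsFractionRing.injective R K
  have hRL : Function.Injective (algebraMap R L) := by
    rw [IsScalarTower.algebraMap_eq R K L]
    exact (algebraMap K L).injective.comp hRK
  have hRS : Function.Injective (algebraMap R (integralClosure R L)) := by
    intro a b h
    apply hRL
    rw [IsScalarTower.algebraMap_apply R (integralClosure R L) L,
      IsScalarTower.algebraMap_apply R (integralClosure R L) L, h]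
  have hπS : algebraMap R (integralClosure R L) π ≠ 0 :=
    fun h => hπ.ne_zero (hRS (by simpa using h))
  have hmRspan : IsLocalRing.maximalIdeal R = Ideal.span {π} :=
    (IsDiscreteValuationRing.irreducible_iff_uniformizer π).mp hπ
  have hmapeq : Ideal.map (algebraMap R (integralClosure R L)) (IsLocalRing.maximalIdeal R) =
      Ideal.span {algebraMap R (integralClosure R L) π} := by
    rw [hmRspan, Ideal.map_span, Set.image_singleton]
  have hmapne : Ideal.map (algebraMap R (integralClosure R L))
      (IsLocalRing.maximalIdeal R) ≠ ⊥ := by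
    rw [hmapeq]
    simpa [Ideal.span_singleton_eq_bot] using hπS
  have hsum : ∑ P ∈ (factors (Ideal.map (algebraMap R (integralClosure R L))
      (IsLocalRing.maximalIdeal R))).toFinset, Ideal.ramificationIdx' (IsLocalRing.maximalIdeal R) P *
      Ideal.inertiaDeg' (IsLocalRing.maximalIdeal R) P = Module.finrank K L :=
    Ideal.sum_ramification_inertia (S := integralClosure R L)
    (p := IsLocalRing.maximalIdeal R) K L (IsDiscreteValuationRing.not_a_field R)
  -- membership of nonzero primes in the factor set
  have hQmem : ∀ Q : Ideal (integralClosure R L), Q ≠ ⊥ → Q.IsPrime →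
      Q ∈ (factors (Ideal.map (algebraMap R (integralClosure R L))
        (IsLocalRing.maximalIdeal R))).toFinset := by
    intro Q hQ0 hQp
    rw [Multiset.mem_toFinset, factors_eq_normalizedFactors,
      UniqueFactorizationMonoid.mem_normalizedFactors_iff hmapne]
    refine ⟨Ideal.prime_of_isPrime hQ0 hQp, ?_⟩
    rw [Ideal.dvd_iff_le, hmapeq, Ideal.span_singleton_le_iff_mem]
    exact (lemA R K π hπ v hv_mul hv_ring hv_π p hp f hmonic hdeg ha0 hval hmin
      L α hα Q hQp hQ0).1
  -- each term in the sum is at least p, and p divides each ramification index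
  have hterm : ∀ Q ∈ (factors (Ideal.map (algebraMap R (integralClosure R L))
      (IsLocalRing.maximalIdeal R))).toFinset,
      (p ∣ Ideal.ramificationIdx'
          (IsLocalRing.maximalIdeal R) Q) ∧
      p ≤ Ideal.ramificationIdx'
          (IsLocalRing.maximalIdeal R) Q ∧
      0 < Ideal.inertiaDeg'
          (IsLocalRing.maximalIdeal R) Q := by
    intro Q hQ
    have hQprime : Prime Q := prime_of_factor _ (Multiset.mem_toFinset.mp hQ)
    have hQp : Q.IsPrime := Ideal.isPrime_of_prime hQprime
    have hQ0 : Q ≠ ⊥ := hQprime.ne_zero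
    have hle : Ideal.map (algebraMap R (integralClosure R L))
        (IsLocalRing.maximalIdeal R) ≤ Q := by
      apply Ideal.le_of_dvd
      rw [factors_eq_normalizedFactors] at hQ
      exact dvd_of_mem_normalizedFactors (Multiset.mem_toFinset.mp hQ)
    have heq : Ideal.ramificationIdx'
        (IsLocalRing.maximalIdeal R) Q =
        Multiset.count Q (normalizedFactors (Ideal.map (algebraMap R (integralClosure R L))
          (IsLocalRing.maximalIdeal R))) :=
      Ideal.IsDedekindDomain.ramificationIdx'_eq_normalizedFactors_count hmapne hQp hQ0
    have hdvd : p ∣ Ideal.ramificationIdx'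
        (IsLocalRing.maximalIdeal R) Q := by
      rw [heq, hmapeq]
      exact (lemA R K π hπ v hv_mul hv_ring hv_π p hp f hmonic hdeg ha0 hval hmin
        L α hα Q hQp hQ0).2
    have hne0 : Ideal.ramificationIdx'
        (IsLocalRing.maximalIdeal R) Q ≠ 0 :=
      Ideal.IsDedekindDomain.ramificationIdx'_ne_zero hmapne hQp hle
    haveI := Ideal.Factors.liesOver (IsLocalRing.maximalIdeal R) ⟨Q, hQ⟩
    refine ⟨hdvd, Nat.le_of_dvd (Nat.pos_of_ne_zero hne0) hdvd, ?_⟩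
    exact Ideal.inertiaDeg'_pos (IsLocalRing.maximalIdeal R) Q
  -- a nonzero maximal ideal exists
  have hnotfieldR : ¬ IsField R := by
    intro hf
    exact IsDiscreteValuationRing.not_a_field R
      ((IsLocalRing.isField_iff_maximalIdeal_eq).mp hf)
  haveI : Algebra.IsIntegral R (integralClosure R L) :=
    IsIntegralClosure.isIntegral_algebra R L
  have hnotfield : ¬ IsField (integralClosure R L) := by
    intro hf
    exact hnotfieldR ((Algebra.IsIntegral.isField_iff_isField hRS).mpr hf)
  obtain ⟨M0, hM0max⟩ := Ideal.exists_maximal (integralClosure R L)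
  have hM00 : M0 ≠ ⊥ := Ring.ne_bot_of_isMaximal_of_not_isField hM0max hnotfield
  have hM0mem := hQmem M0 hM00 hM0max.isPrime
  have hp_le : p ≤ Module.finrank K L := by
    calc p ≤ Ideal.ramificationIdx'
          (IsLocalRing.maximalIdeal R) M0 *
          Ideal.inertiaDeg'
          (IsLocalRing.maximalIdeal R) M0 := by
            obtain ⟨_, h2, h3⟩ := hterm M0 hM0mem
            calc p ≤ _ := h2
            _ ≤ _ := Nat.le_mul_of_pos_right _ h3
      _ ≤ ∑ P ∈ (factors (Ideal.map (algebraMap R (integralClosure R L))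
          (IsLocalRing.maximalIdeal R))).toFinset,
          Ideal.ramificationIdx'
            (IsLocalRing.maximalIdeal R) P *
          Ideal.inertiaDeg'
            (IsLocalRing.maximalIdeal R) P :=
        Finset.single_le_sum (f := fun P =>
          Ideal.ramificationIdx'
            (IsLocalRing.maximalIdeal R) P *
          Ideal.inertiaDeg'
            (IsLocalRing.maximalIdeal R) P) (fun i _ => Nat.zero_le _) hM0mem
      _ = Module.finrank K L := hsum
  refine ⟨hp_le, fun hrk => ?_⟩
  -- uniqueness of the nonzero prime
  have huniq : ∀ Q : Ideal (integralClosure R L), Q ≠ ⊥ → Q.IsPrime → Q = M0 := by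
    intro Q hQ0 hQp
    by_contra hne
    have h1 := hQmem Q hQ0 hQp
    have hsub : {Q, M0} ⊆ (factors (Ideal.map (algebraMap R (integralClosure R L))
        (IsLocalRing.maximalIdeal R))).toFinset := by
      intro x hx
      rcases Finset.mem_insert.mp hx with h | h
      · exact h ▸ h1
      · exact (Finset.mem_singleton.mp h) ▸ hM0mem
    have hle := Finset.sum_le_sum_of_subset hsub
      (f := fun P => Ideal.ramificationIdx'
        (IsLocalRing.maximalIdeal R) P *
        Ideal.inertiaDeg'
          (IsLocalRing.maximalIdeal R) P)
    rw [Finset.sum_pair hne] at hle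
    obtain ⟨_, hq2, hq3⟩ := hterm Q h1
    obtain ⟨_, hm2, hm3⟩ := hterm M0 hM0mem
    have hq : p ≤ Ideal.ramificationIdx'
        (IsLocalRing.maximalIdeal R) Q *
        Ideal.inertiaDeg'
          (IsLocalRing.maximalIdeal R) Q :=
      le_trans hq2 (Nat.le_mul_of_pos_right _ hq3)
    have hm : p ≤ Ideal.ramificationIdx'
        (IsLocalRing.maximalIdeal R) M0 *
        Ideal.inertiaDeg'
          (IsLocalRing.maximalIdeal R) M0 :=
      le_trans hm2 (Nat.le_mul_of_pos_right _ hm3)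
    rw [hsum, hrk] at hle
    have := hp.pos
    omega
  have hfin : {I : Ideal (integralClosure R L) | I.IsPrime}.Finite := by
    apply Set.Finite.subset ((Set.finite_singleton M0).insert ⊥)
    intro I hI
    by_cases h : I = ⊥
    · simp [h, Set.mem_insert_iff]
    · simp [Set.mem_insert_iff, huniq I h hI]
  haveI hdvr : IsDiscreteValuationRing (integralClosure R L) :=
    (IsDiscreteValuationRing.iff_pid_with_one_nonzero_prime (integralClosure R L)).mpr
      ⟨IsPrincipalIdealRing.of_finite_primes hfin,
        M0, ⟨hM00, hM0max.isPrime⟩, fun Q hQ => huniq Q hQ.1 hQ.2⟩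
  refine ⟨hdvr, fun ϖ hϖ => ?_⟩
  -- the ramification index at M0 equals p
  obtain ⟨hdvdM, hleM, hposM⟩ := hterm M0 hM0mem
  have hEFle : Ideal.ramificationIdx'
      (IsLocalRing.maximalIdeal R) M0 *
      Ideal.inertiaDeg'
        (IsLocalRing.maximalIdeal R) M0 ≤ p := by
    calc _ ≤ _ := Finset.single_le_sum (f := fun P =>
        Ideal.ramificationIdx'
          (IsLocalRing.maximalIdeal R) P *
        Ideal.inertiaDeg'
          (IsLocalRing.maximalIdeal R) P) (fun i _ => Nat.zero_le _) hM0mem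
      _ = p := by rw [hsum, hrk]
  have heP : Ideal.ramificationIdx'
      (IsLocalRing.maximalIdeal R) M0 = p := by
    have h1 : Ideal.ramificationIdx'
        (IsLocalRing.maximalIdeal R) M0 ≤
        Ideal.ramificationIdx'
          (IsLocalRing.maximalIdeal R) M0 *
        Ideal.inertiaDeg'
          (IsLocalRing.maximalIdeal R) M0 := Nat.le_mul_of_pos_right _ hposM
    omega
  -- conclude
  obtain ⟨nn, hassoc⟩ := IsDiscreteValuationRing.associated_pow_irreducible hπS hϖ
  have hM0eq : M0 = Ideal.span {ϖ} := by
    rw [IsLocalRing.eq_maximalIdeal hM0max]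
    exact (IsDiscreteValuationRing.irreducible_iff_uniformizer ϖ).mp hϖ
  have hspan : Ideal.span {algebraMap R (integralClosure R L) π} = M0 ^ nn := by
    rw [Ideal.span_singleton_eq_span_singleton.mpr hassoc, ← Ideal.span_singleton_pow, ← hM0eq]
  have hM0prime : Prime M0 := Ideal.prime_of_isPrime hM00 hM0max.isPrime
  have hcount : Multiset.count M0 (normalizedFactors
      (Ideal.span {algebraMap R (integralClosure R L) π})) = nn := by
    rw [hspan, UniqueFactorizationMonoid.normalizedFactors_pow,
      UniqueFactorizationMonoid.normalizedFactors_irreducible hM0prime.irreducible,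
      normalize_eq, Multiset.nsmul_singleton, Multiset.count_replicate_self]
  have hcount' : Ideal.ramificationIdx'
      (IsLocalRing.maximalIdeal R) M0 =
      Multiset.count M0 (normalizedFactors
        (Ideal.span {algebraMap R (integralClosure R L) π})) := by
    rw [← hmapeq]
    exact Ideal.IsDedekindDomain.ramificationIdx'_eq_normalizedFactors_count hmapne
      hM0max.isPrime hM00
  have hnnp : nn = p := by
    rw [← hcount, ← hcount', heP]
  rw [← hnnp]
  exact hassoc

end Aux

/-- Lemma 2.3(ii).  Let `R` be a DVR with fraction field `K` and
normalized valuation `v`.  Let `f = T^p + a_{p-1}T^{p-1} + ⋯ + a_0 ∈ K[T]` be a separable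
monic polynomial of prime degree `p` with `a_0 ≠ 0`, `p ∤ v(a_0)` and
`min_i v(a_i) > p · max_i (v(a_0) − v(a_i))` (indices of nonzero coefficients `a_i`, `i < p`).
Then `K' = K[T]/(f)` is a field (i.e. `f` is irreducible), the integral closure of `R` in
`K'` is a DVR, and its ramification index over `R` equals `p`. -/
theorem statement1
    (R : Type*) [CommRing R] [IsDomain R] [IsDiscreteValuationRing R]
    (K : Type*) [Field K] [Algebra R K] [IsFractionRing R K]
    (π : R) (hπ : Irreducible π)
    -- the normalized valuation `v` on `K` associated with `R`:
    (v : K → ℤ)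
    (hv_mul : ∀ x y : K, x ≠ 0 → y ≠ 0 → v (x * y) = v x + v y)
    (hv_ring : ∀ x : K, x ≠ 0 → (0 ≤ v x ↔ ∃ r : R, algebraMap R K r = x))
    (hv_π : v (algebraMap R K π) = 1)
    (p : ℕ) (hp : p.Prime) (f : Polynomial K)
    (hmonic : f.Monic) (hdeg : f.natDegree = p) (hsep : f.Separable)
    (ha0 : f.coeff 0 ≠ 0)
    (hval : ¬ (p : ℤ) ∣ v (f.coeff 0))
    (hmin : ∀ i < p, ∀ j < p, f.coeff i ≠ 0 → f.coeff j ≠ 0 →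
      v (f.coeff i) > (p : ℤ) * (v (f.coeff 0) - v (f.coeff j))) :
    ∃ hf : Irreducible f,
      letI : Fact (Irreducible f) := ⟨hf⟩
      IsDiscreteValuationRing (integralClosure R (AdjoinRoot f)) ∧
      ∀ ϖ : integralClosure R (AdjoinRoot f), Irreducible ϖ →
        Associated (algebraMap R (integralClosure R (AdjoinRoot f)) π) (ϖ ^ p) := by
  have hfne : f ≠ 0 := hmonic.ne_zero
  have hdegpos : 0 < f.natDegree := by rw [hdeg]; exact hp.pos
  -- separability of the splitting field
  haveI hgal : IsGalois K f.SplittingField :=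
    IsGalois.of_separable_splitting_field hsep
  -- every monic irreducible factor of f has degree ≥ p
  have hfactor : ∀ g : Polynomial K, g.Monic → Irreducible g → g ∣ f → p ≤ g.natDegree := by
    intro g hgm hgirr hgdvd
    haveI : Fact (Irreducible g) := ⟨hgirr⟩
    have hgne : g ≠ 0 := hgm.ne_zero
    have hgdeg : 0 < g.natDegree := hgirr.natDegree_pos
    -- a root of g in the splitting field of f
    have hgsplit : Polynomial.Splits (g.map (algebraMap K f.SplittingField)) :=
      (Polynomial.SplittingField.splits f).of_dvd (Polynomial.map_ne_zero hfne)
        (Polynomial.map_dvd _ hgdvd)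
    obtain ⟨β, hβ⟩ := hgsplit.exists_eval_eq_zero (by
      rw [Polynomial.degree_map]; exact (Polynomial.natDegree_pos_iff_degree_pos.mp hgdeg).ne')
    have hβ' : Polynomial.aeval β g = 0 := by rwa [Polynomial.aeval_def, Polynomial.eval₂_eq_eval_map]
    -- separability of AdjoinRoot g
    haveI : Algebra.IsSeparable K (AdjoinRoot g) :=
      Algebra.IsSeparable.of_algHom K f.SplittingField (AdjoinRoot.liftAlgHom g (Algebra.ofId K f.SplittingField) β hβ')
    haveI : FiniteDimensional K (AdjoinRoot g) := (AdjoinRoot.powerBasis hgne).finite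
    -- root of f in AdjoinRoot g
    obtain ⟨h, hfh⟩ := hgdvd
    have hroot : Polynomial.aeval (AdjoinRoot.root g) f = 0 := by
      rw [hfh, _root_.map_mul]
      have : Polynomial.aeval (AdjoinRoot.root g) g = 0 := by
        rw [Polynomial.aeval_def, AdjoinRoot.algebraMap_eq]
        exact AdjoinRoot.eval₂_root g
      rw [this, zero_mul]
    have hle := (lemB R K π hπ v hv_mul hv_ring hv_π p hp f hmonic hdeg ha0 hval hmin
      (AdjoinRoot g) (AdjoinRoot.root g) hroot).1
    rwa [(AdjoinRoot.powerBasis hgne).finrank] at hle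
  -- f is irreducible
  have hfirr : Irreducible f := by
    obtain ⟨g0, hg0irr, hg0dvd⟩ := WfDvdMonoid.exists_irreducible_factor
      (fun h => by
        have := Polynomial.natDegree_eq_zero_of_isUnit h
        omega) hfne
    have hg0ne : g0 ≠ 0 := hg0irr.ne_zero
    set g : Polynomial K := g0 * C g0.leadingCoeff⁻¹ with hg
    have hgm : g.Monic := Polynomial.monic_mul_leadingCoeff_inv hg0ne
    have hunit : IsUnit (C g0.leadingCoeff⁻¹) :=
      Polynomial.isUnit_C.mpr (IsUnit.inv (Ne.isUnit (Polynomial.leadingCoeff_ne_zero.mpr hg0ne)))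
    have hassoc : Associated g0 g := associated_mul_unit_right g0 _ hunit
    have hgirr : Irreducible g := hassoc.irreducible hg0irr
    have hgdvd : g ∣ f := hassoc.symm.dvd.trans hg0dvd
    have hge := hfactor g hgm hgirr hgdvd
    have hgle : g.natDegree ≤ f.natDegree := Polynomial.natDegree_le_of_dvd hgdvd hfne
    -- g and f are associated
    obtain ⟨c, hc⟩ := hgdvd
    have hcne : c ≠ 0 := by
      intro h
      rw [h, mul_zero] at hc
      exact hfne hc
    have hcdeg : c.natDegree = 0 := by
      have := Polynomial.natDegree_mul (hgm.ne_zero) hcne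
      rw [← hc] at this
      omega
    have hcunit : IsUnit c := by
      rw [Polynomial.eq_C_of_natDegree_eq_zero hcdeg]
      refine Polynomial.isUnit_C.mpr (Ne.isUnit ?_)
      intro h
      apply hcne
      rw [Polynomial.eq_C_of_natDegree_eq_zero hcdeg, h, _root_.map_zero]
    have : Associated g f := ⟨hcunit.unit, by rw [IsUnit.unit_spec, ← hc]⟩
    exact this.irreducible hgirr
  refine ⟨hfirr, ?_⟩
  haveI : Fact (Irreducible f) := ⟨hfirr⟩
  -- instances on AdjoinRoot f
  have hroot : Polynomial.aeval (AdjoinRoot.root f) f = 0 := by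
    rw [Polynomial.aeval_def, AdjoinRoot.algebraMap_eq]
    exact AdjoinRoot.eval₂_root f
  obtain ⟨β, hβ⟩ := (Polynomial.SplittingField.splits f).exists_eval_eq_zero (by
    rw [Polynomial.degree_map]; exact (Polynomial.natDegree_pos_iff_degree_pos.mp hdegpos).ne')
  have hβ' : Polynomial.aeval β f = 0 := by rwa [Polynomial.aeval_def, Polynomial.eval₂_eq_eval_map]
  haveI : Algebra.IsSeparable K (AdjoinRoot f) :=
    Algebra.IsSeparable.of_algHom K f.SplittingField (AdjoinRoot.liftAlgHom f (Algebra.ofId K f.SplittingField) β hβ')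
  haveI : FiniteDimensional K (AdjoinRoot f) := (AdjoinRoot.powerBasis hfne).finite
  have hrk : Module.finrank K (AdjoinRoot f) = p := by
    rw [(AdjoinRoot.powerBasis hfne).finrank]
    exact hdeg
  exact (lemB R K π hπ v hv_mul hv_ring hv_π p hp f hmonic hdeg ha0 hval hmin
    (AdjoinRoot f) (AdjoinRoot.root f) hroot).2 hrk
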